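/- Suppose that for every continuous compactly supported function f : M → ℝ with f ≥ 0 and every m ∈ M, the function x ↦ f(x⁻¹•m) is integrable on G with respect to left Haar measure. Then every G-orbit in M is closed in M, and the stabilizer subgroup {x ∈ G : x•m = m} of every point m ∈ M is compact. -/

import Mathlib

open MeasureTheory Set Pointwise

/-- Key lemma: under the integrability hypothesis, the preimage of any compact set under
`x ↦ x⁻¹ • m` is compact. -/
theorem key_compact_preimage
    {G : Type*} [Group G] [TopologicalSpace G] [IsTopologicalGroup G]
    [LocallyCompactSpace G] [MeasurableSpace G] [BorelSpace G]
    (μ : Measure G) [μ.IsHaarMeasure]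
    {M : Type*} [TopologicalSpace M] [LocallyCompactSpace M] [T2Space M]
    [MulAction G M] [ContinuousSMul G M]
    (h : ∀ f : M → ℝ, Continuous f → HasCompactSupport f → (∀ m, 0 ≤ f m) →
      ∀ m : M, Integrable (fun x : G => f (x⁻¹ • m)) μ)
    (m : M) (K : Set M) (hK : IsCompact K) :
    IsCompact ((fun x : G => x⁻¹ • m) ⁻¹' K) := by
  have hcont : Continuous (fun x : G => x⁻¹ • m) := continuous_inv.smul continuous_const
  set E := (fun x : G => x⁻¹ • m) ⁻¹' K with hEdef
  have hEclosed : IsClosed E := hK.isClosed.preimage hcont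
  by_contra hnc
  have hstep : ∀ C : Set G, IsCompact C → ∃ x, x ∈ E ∧ x ∉ C := by
    intro C hC
    by_contra hx
    push_neg at hx
    exact hnc (hC.of_isClosed_subset hEclosed fun x hx' => hx x hx')
  obtain ⟨V, hVc, hV1⟩ := exists_compact_mem_nhds (1 : G)
  set W : Set G := V * V⁻¹ with hWdef
  have hWc : IsCompact W := hVc.mul hVc.inv
  have hsmulW : ∀ g : G, IsCompact (g • W) := by
    intro g
    rw [← Set.image_smul]
    exact hWc.image (continuous_const_smul g)
  choose! pick hpickE hpickC using hstep
  -- iterate: state is a compact set; at each step pick a point of `E` outside it and enlarge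
  let step : {C : Set G // IsCompact C} → G × {C : Set G // IsCompact C} := fun C =>
    ⟨pick C.1, ⟨C.1 ∪ pick C.1 • W, C.2.union (hsmulW _)⟩⟩
  let F : ℕ → G × {C : Set G // IsCompact C} :=
    fun n => Nat.rec (step ⟨∅, isCompact_empty⟩) (fun _ p => step p.2) n
  set u : ℕ → G := fun n => (F n).1 with hu
  set D : ℕ → Set G := fun n => (F n).2.1 with hD
  have hmemE : ∀ n, u n ∈ E := by
    intro n
    cases n with
    | zero => exact hpickE _ isCompact_empty
    | succ k => exact hpickE _ (F k).2.2
  have hsub : ∀ n, u n • W ⊆ D n := by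
    intro n
    cases n with
    | zero => exact subset_union_right
    | succ k => exact subset_union_right
  have hmono : ∀ n, D n ⊆ D (n + 1) := fun n => subset_union_left
  have hmono' : ∀ i j, i ≤ j → D i ⊆ D j := by
    intro i j hij
    induction j with
    | zero => rw [Nat.le_zero.mp hij]
    | succ k ih =>
      rcases Nat.le_succ_iff.mp hij with hle | rfl
      · exact (ih hle).trans (hmono k)
      · exact Set.Subset.rfl
  have hnot : ∀ n, u (n + 1) ∉ D n := fun n => hpickC _ (F n).2.2
  have hnotin : ∀ i n, i < n → u n ∉ u i • W := by
    intro i n hin hmem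
    cases n with
    | zero => exact absurd hin (Nat.not_lt_zero i)
    | succ k => exact hnot k (hmono' i k (Nat.lt_succ_iff.mp hin) (hsub i hmem))
  -- the open sets `u n • U` are pairwise disjoint and each has measure `μ U > 0`
  set U : Set G := interior V with hUdef
  have hUopen : IsOpen U := isOpen_interior
  have h1U : (1 : G) ∈ U := mem_interior_iff_mem_nhds.mpr hV1
  have hUV : U ⊆ V := interior_subset
  have hdisj : Pairwise (Function.onFun Disjoint fun n => u n • U) := by
    intro i j hij
    wlog hlt : i < j generalizing i j
    · exact (this hij.symm (hij.lt_or_gt.resolve_left hlt)).symm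
    refine Set.disjoint_left.mpr ?_
    rintro z ⟨v, hv, rfl⟩ ⟨v', hv', hz⟩
    refine hnotin i j hlt ⟨v * v'⁻¹, mul_mem_mul (hUV hv) (Set.inv_mem_inv.mpr (hUV hv')), ?_⟩
    have hz' : u j * v' = u i * v := hz
    calc u i • (v * v'⁻¹) = u i * v * v'⁻¹ := by rw [smul_eq_mul, mul_assoc]
      _ = u j := by rw [← hz', mul_assoc, mul_inv_cancel, mul_one]
  -- a compactly supported function equal to 1 on `V⁻¹ • K`
  have hK' : IsCompact (V⁻¹ • K : Set M) := hVc.inv.smul_set hK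
  obtain ⟨f, hf1, -, hfc, hf01⟩ :=
    exists_continuous_one_zero_of_isCompact hK' isClosed_empty (disjoint_empty _)
  have hint : Integrable (fun x : G => f (x⁻¹ • m)) μ :=
    h f f.continuous hfc (fun x => (hf01 x).1) m
  have hfin : μ {x : G | 1 ≤ f (x⁻¹ • m)} < ⊤ :=
    hint.measure_ge_lt_top one_pos
  -- each `u n • U` lies inside that set
  have hincl : ∀ n, u n • U ⊆ {x : G | 1 ≤ f (x⁻¹ • m)} := by
    rintro n x ⟨v, hv, rfl⟩
    have hmem : (u n • v)⁻¹ • m ∈ V⁻¹ • K := by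
      have : (u n • v)⁻¹ • m = v⁻¹ • ((u n)⁻¹ • m) := by
        rw [smul_eq_mul, mul_inv_rev, mul_smul]
      rw [this]
      exact Set.smul_mem_smul (Set.inv_mem_inv.mpr (hUV hv)) (hmemE n)
    have := hf1 hmem
    simp only [Set.mem_setOf_eq, this, Pi.one_apply, le_refl]
  -- conclude: infinitely many disjoint translates of positive equal measure inside a finite set
  have hUpos : 0 < μ U := hUopen.measure_pos μ ⟨1, h1U⟩
  have hmeas : ∀ n, MeasurableSet (u n • U) := fun n => (hUopen.smul (u n)).measurableSet
  have hsum : μ (⋃ n, u n • U) = ∑' n : ℕ, μ (u n • U) := measure_iUnion hdisj hmeas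
  have hconst : ∀ n : ℕ, μ (u n • U) = μ U := fun n => MeasureTheory.measure_smul μ (u n) U
  have htop : μ (⋃ n, u n • U) = ⊤ := by
    rw [hsum]
    simp only [hconst]
    exact ENNReal.tsum_const_eq_top_of_ne_zero hUpos.ne'
  have hle : μ (⋃ n, u n • U) ≤ μ {x : G | 1 ≤ f (x⁻¹ • m)} :=
    measure_mono (Set.iUnion_subset hincl)
  rw [htop] at hle
  exact absurd (lt_of_le_of_lt hle hfin) (lt_irrefl ⊤)

theorem stmt2
    {G : Type*} [Group G] [TopologicalSpace G] [IsTopologicalGroup G]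
    [LocallyCompactSpace G] [MeasurableSpace G] [BorelSpace G]
    (μ : Measure G) [μ.IsHaarMeasure]
    {M : Type*} [TopologicalSpace M] [LocallyCompactSpace M] [T2Space M]
    [MulAction G M] [ContinuousSMul G M]
    (h : ∀ f : M → ℝ, Continuous f → HasCompactSupport f → (∀ m, 0 ≤ f m) →
      ∀ m : M, Integrable (fun x : G => f (x⁻¹ • m)) μ) :
    (∀ m : M, IsClosed (MulAction.orbit G m)) ∧
    (∀ m : M, IsCompact {x : G | x • m = m}) := by
  have key := key_compact_preimage μ h
  constructor
  · intro m
    rw [← closure_subset_iff_isClosed]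
    intro p hp
    obtain ⟨K, hKc, hKnhds⟩ := exists_compact_mem_nhds p
    set E := (fun x : G => x⁻¹ • m) ⁻¹' K with hEdef
    have hEc : IsCompact E := key m K hKc
    have hSc : IsCompact ((fun x : G => x⁻¹ • m) '' E) := hEc.image (continuous_inv.smul continuous_const)
    have hsub : MulAction.orbit G m ∩ interior K ⊆ (fun x : G => x⁻¹ • m) '' E := by
      rintro q ⟨⟨x, rfl⟩, hq⟩
      exact ⟨x⁻¹, by simpa [E] using interior_subset hq, by simp⟩
    have hp' : p ∈ closure (MulAction.orbit G m ∩ interior K) := by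
      rw [mem_closure_iff_nhds] at hp ⊢
      intro t ht
      obtain ⟨z, hz1, hz2⟩ := hp (t ∩ interior K)
        (Filter.inter_mem ht (interior_mem_nhds.mpr hKnhds))
      exact ⟨z, hz1.1, hz2, hz1.2⟩
    have : p ∈ (fun x : G => x⁻¹ • m) '' E :=
      (hSc.isClosed.closure_subset_iff.mpr hsub) hp'
    obtain ⟨x, -, rfl⟩ := this
    exact ⟨x⁻¹, rfl⟩
  · intro m
    obtain ⟨K, hKc, hKnhds⟩ := exists_compact_mem_nhds m
    have hEc : IsCompact ((fun x : G => x⁻¹ • m) ⁻¹' K) := key m K hKc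
    refine hEc.of_isClosed_subset ?_ ?_
    · exact isClosed_eq (continuous_id.smul continuous_const) continuous_const
    · intro x hx
      have : x⁻¹ • m = m := by
        have hxm : x • m = m := hx
        calc x⁻¹ • m = x⁻¹ • (x • m) := by rw [hxm]
          _ = m := inv_smul_smul x m
      simpa [this] using mem_of_mem_nhds hKnhds
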